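/- arXiv:2307.15869 — 4 statements merged into one kernel-verified Lean document; each statement's English description precedes it below -/
import Mathlib

section
/- Let X be a real locally convex topological vector space, let Ω ⊂ X be a nonempty convex set, and let w ∈ Ω. Then: (a) aff(Ω) − w = cone(Ω−Ω); (b) cone(Ω−Ω) is the linear subspace parallel to aff(Ω); (c) aff(Ω) − w = cone(Ω−w) if and only if cone(Ω−w) is a linear subspace of X; (d) cl(aff(Ω)) − w = cl(cone(Ω−w)) if and only if cl(cone(Ω−w)) is a linear subspace of X. -/
open Pointwise Set

def coneHull {Z : Type*} [AddCommGroup Z] [Module ℝ Z] (A : Set Z) : Set Z :=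
  {y | ∃ c : ℝ, 0 ≤ c ∧ ∃ a ∈ A, y = c • a}

def IsLinearSubspace {Z : Type*} [AddCommGroup Z] [Module ℝ Z] (S : Set Z) : Prop :=
  ∃ L : Submodule ℝ Z, (L : Set Z) = S

section aux
variable {X : Type*} [AddCommGroup X] [Module ℝ X]

lemma mem_coneHull_self {A : Set X} {a : X} (ha : a ∈ A) : a ∈ coneHull A :=
  ⟨1, zero_le_one, a, ha, (one_smul ℝ a).symm⟩

lemma coneHull_mono {A B : Set X} (h : A ⊆ B) : coneHull A ⊆ coneHull B := by
  rintro x ⟨c, hc, a, ha, rfl⟩; exact ⟨c, hc, a, h ha, rfl⟩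

def coneSub (Ω : Set X) (hne : Ω.Nonempty) (hconv : Convex ℝ Ω) : Submodule ℝ X where
  carrier := coneHull (Ω - Ω)
  zero_mem' := by
    obtain ⟨a, ha⟩ := hne
    exact ⟨0, le_rfl, a - a, sub_mem_sub ha ha, (zero_smul ℝ _).symm⟩
  add_mem' := by
    rintro x y ⟨c, hc, -, ⟨u1, hu1, v1, hv1, rfl⟩, rfl⟩ ⟨d, hd, -, ⟨u2, hu2, v2, hv2, rfl⟩, rfl⟩
    rcases eq_or_lt_of_le (add_nonneg hc hd) with hcd | hcd
    · have hc0 : c = 0 := by linarith [hc, hd]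
      have hd0 : d = 0 := by linarith
      obtain ⟨a, ha⟩ := hne
      exact ⟨0, le_rfl, a - a, sub_mem_sub ha ha, by simp [hc0, hd0]⟩
    · set t : ℝ := c / (c + d) with ht
      have hcd' : c + d ≠ 0 := ne_of_gt hcd
      have ht0 : 0 ≤ t := div_nonneg hc (le_of_lt hcd)
      have ht1 : 0 ≤ 1 - t := by
        rw [sub_nonneg, ht, div_le_one hcd]; linarith
      have hsum : t + (1 - t) = 1 := by ring
      refine ⟨c + d, le_of_lt hcd, (t • u1 + (1 - t) • u2) - (t • v1 + (1 - t) • v2),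
        sub_mem_sub (hconv hu1 hu2 ht0 ht1 hsum) (hconv hv1 hv2 ht0 ht1 hsum), ?_⟩
      match_scalars <;> (rw [ht]; field_simp) <;> ring
  smul_mem' := by
    rintro r x ⟨c, hc, -, ⟨u, hu, v, hv, rfl⟩, rfl⟩
    rcases le_or_gt 0 (r * c) with h | h
    · refine ⟨r * c, h, u - v, sub_mem_sub hu hv, ?_⟩
      show r • c • (u - v) = (r * c) • (u - v)
      rw [smul_smul]
    · refine ⟨-(r * c), by linarith, v - u, sub_mem_sub hv hu, ?_⟩
      show r • c • (u - v) = (-(r * c)) • (v - u)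
      module

end aux

theorem stmt4 {X : Type*} [AddCommGroup X] [Module ℝ X] [TopologicalSpace X]
    [IsTopologicalAddGroup X] [ContinuousSMul ℝ X] [LocallyConvexSpace ℝ X]
    (Ω : Set X) (hne : Ω.Nonempty) (hconv : Convex ℝ Ω) (w : X) (hw : w ∈ Ω) :
    ((affineSpan ℝ Ω : Set X) - {w} = coneHull (Ω - Ω)) ∧
    (∃ L : Submodule ℝ X, (L : Set X) = coneHull (Ω - Ω) ∧
      ∃ x₀ ∈ (affineSpan ℝ Ω : Set X), (affineSpan ℝ Ω : Set X) = x₀ +ᵥ (L : Set X)) ∧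
    ((affineSpan ℝ Ω : Set X) - {w} = coneHull (Ω - {w}) ↔
      IsLinearSubspace (coneHull (Ω - {w}))) ∧
    (closure (affineSpan ℝ Ω : Set X) - {w} = closure (coneHull (Ω - {w})) ↔
      IsLinearSubspace (closure (coneHull (Ω - {w})))) := by
  set M : Submodule ℝ X := coneSub Ω hne hconv with hM
  have hMcoe : (M : Set X) = coneHull (Ω - Ω) := rfl
  -- M equals vectorSpan
  have hspan : Submodule.span ℝ (Ω - Ω) = M := by
    apply le_antisymm
    · rw [Submodule.span_le, hMcoe]
      exact fun x hx => mem_coneHull_self hx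
    · intro x hx
      obtain ⟨c, hc, a, ha, rfl⟩ := hx
      exact Submodule.smul_mem _ c (Submodule.subset_span ha)
  have hvs : vectorSpan ℝ Ω = M := by
    rw [vectorSpan, ← hspan]
    congr 1
  -- part (a)
  have ha : (affineSpan ℝ Ω : Set X) - {w} = coneHull (Ω - Ω) := by
    have h1 : ((affineSpan ℝ Ω).direction : Set X) = (· -ᵥ w) '' (affineSpan ℝ Ω) :=
      AffineSubspace.coe_direction_eq_vsub_set_right (mem_affineSpan ℝ hw)
    have h2 : (affineSpan ℝ Ω).direction = M := by rw [direction_affineSpan, hvs]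
    rw [← hMcoe, ← h2, h1, Set.sub_singleton]
    rfl
  have hmem : ∀ x : X, x ∈ (affineSpan ℝ Ω : Set X) ↔ x - w ∈ coneHull (Ω - Ω) := by
    intro x
    rw [← ha, Set.sub_singleton]
    constructor
    · exact fun hx => ⟨x, hx, rfl⟩
    · rintro ⟨z, hz, hzx⟩
      have hz' : z = x := by
        have : z - w = x - w := hzx
        exact sub_left_injective this
      rwa [hz'] at hz
  refine ⟨ha, ?_, ?_, ?_⟩
  · -- part (b)
    refine ⟨M, hMcoe, w, mem_affineSpan ℝ hw, ?_⟩
    ext x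
    constructor
    · intro hx
      refine ⟨x - w, ?_, ?_⟩
      · rw [hMcoe]; exact (hmem x).1 hx
      · show w + (x - w) = x; abel
    · rintro ⟨y, hy, rfl⟩
      apply (hmem _).2
      show w + y - w ∈ coneHull (Ω - Ω)
      have h1 : w + y - w = y := by abel
      rw [h1, ← hMcoe]
      exact hy
  · -- part (c)
    constructor
    · intro h
      exact ⟨M, by rw [hMcoe, ← ha, h]⟩
    · rintro ⟨L, hL⟩
      rw [ha]
      apply Set.Subset.antisymm
      · rintro x ⟨c, hc, -, ⟨u, hu, v, hv, rfl⟩, rfl⟩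
        show c • (u - v) ∈ coneHull (Ω - {w})
        rw [← hL]
        have h1 : u - w ∈ (L : Set X) := by
          rw [hL]; exact mem_coneHull_self (sub_mem_sub hu rfl)
        have h2 : v - w ∈ (L : Set X) := by
          rw [hL]; exact mem_coneHull_self (sub_mem_sub hv rfl)
        have heq : u - v = (u - w) - (v - w) := by abel
        rw [heq]
        exact L.smul_mem c (L.sub_mem h1 h2)
      · exact coneHull_mono (Set.sub_subset_sub le_rfl (by simpa using hw))
  · -- part (d)
    have hsub : ∀ s : Set X, s - {w} = (-w) +ᵥ s := by
      intro s; ext x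
      simp only [Set.sub_singleton, Set.mem_image, Set.mem_vadd_set]
      constructor
      · rintro ⟨a, ha', rfl⟩
        exact ⟨a, ha', by first | (show a - w = -w + a; abel) | (show -w + a = a - w; abel)⟩
      · rintro ⟨a, ha', rfl⟩
        exact ⟨a, ha', by first | (show a - w = -w + a; abel) | (show -w + a = a - w; abel)⟩
    have hclosure : closure (affineSpan ℝ Ω : Set X) - {w} = closure (coneHull (Ω - Ω)) := by
      rw [← ha, hsub, hsub, closure_vadd]
    rw [hclosure]
    constructor
    · intro h
      refine ⟨M.topologicalClosure, ?_⟩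
      rw [Submodule.topologicalClosure_coe, hMcoe, h]
    · rintro ⟨L, hL⟩
      apply Set.Subset.antisymm
      · have hLclosed : IsClosed (L : Set X) := by rw [hL]; exact isClosed_closure
        have hsubL : coneHull (Ω - Ω) ⊆ (L : Set X) := by
          rintro x ⟨c, hc, -, ⟨u, hu, v, hv, rfl⟩, rfl⟩
          show c • (u - v) ∈ (L : Set X)
          have h1 : u - w ∈ (L : Set X) := by
            rw [hL]; exact subset_closure (mem_coneHull_self (sub_mem_sub hu rfl))
          have h2 : v - w ∈ (L : Set X) := by
            rw [hL]; exact subset_closure (mem_coneHull_self (sub_mem_sub hv rfl))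
          have heq : u - v = (u - w) - (v - w) := by abel
          rw [heq]
          exact L.smul_mem c (L.sub_mem h1 h2)
        rw [← hL]
        exact closure_minimal hsubL hLclosed
      · exact closure_mono (coneHull_mono (Set.sub_subset_sub le_rfl (by simpa using hw)))
end

section
/- Let X be a real locally convex topological vector space and let Ω ⊂ X be a nonempty convex set. If x̄ ∈ sqri(Ω) (respectively x̄ ∈ ri(Ω), x̄ ∈ iri(Ω), x̄ ∈ qri(Ω)) and x₀ ∈ Ω, then for every t ∈ [0,1) one has (1−t)x̄ + t x₀ ∈ sqri(Ω) (respectively ∈ ri(Ω), ∈ iri(Ω), ∈ qri(Ω)). -/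
open Pointwise Set

/-- Intrinsic relative interior. -/
def iri {Z : Type*} [AddCommGroup Z] [Module ℝ Z] (A : Set Z) : Set Z :=
  {x ∈ A | IsLinearSubspace (coneHull (A - {x}))}

/-- Strong quasi-relative interior. -/
def sqri {Z : Type*} [AddCommGroup Z] [Module ℝ Z] [TopologicalSpace Z] (A : Set Z) : Set Z :=
  {x ∈ A | IsLinearSubspace (coneHull (A - {x})) ∧ IsClosed (coneHull (A - {x}))}

/-- Quasi-relative interior. -/
def qri {Z : Type*} [AddCommGroup Z] [Module ℝ Z] [TopologicalSpace Z] (A : Set Z) : Set Z :=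
  {x ∈ A | IsLinearSubspace (closure (coneHull (A - {x})))}

/-- Interior of a set relative to the closure of its affine hull. -/
def ri {X : Type*} [AddCommGroup X] [Module ℝ X] [TopologicalSpace X] (A : Set X) : Set X :=
  {x ∈ A | ∃ V ∈ nhds (0 : X), ∀ v ∈ V, x + v ∈ closure (affineSpan ℝ A : Set X) → x + v ∈ A}

lemma mem_sub_singleton' {Z : Type*} [AddCommGroup Z] {A : Set Z} {x a : Z} :
    a ∈ A - {x} ↔ ∃ ω ∈ A, ω - x = a := by
  simp [Set.sub_singleton]

lemma mem_coneHull_of_mem' {Z : Type*} [AddCommGroup Z] [Module ℝ Z] {A : Set Z} {a : Z}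
    (ha : a ∈ A) : a ∈ coneHull A :=
  ⟨1, zero_le_one, a, ha, (one_smul ℝ a).symm⟩

/-- `cone(Ω - x̄) ⊆ cone(Ω - x_t)`. -/
lemma coneHull_subset_shift {X : Type*} [AddCommGroup X] [Module ℝ X]
    {Ω : Set X} (hconv : Convex ℝ Ω) {xbar x₀ : X} (hx₀ : x₀ ∈ Ω) {t : ℝ}
    (ht : t ∈ Set.Ico (0 : ℝ) 1) :
    coneHull (Ω - {xbar}) ⊆ coneHull (Ω - {(1 - t) • xbar + t • x₀}) := by
  rintro y ⟨c, hc, a, ha, rfl⟩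
  rw [mem_sub_singleton'] at ha
  obtain ⟨ω, hω, rfl⟩ := ha
  have hs : (0 : ℝ) < 1 - t := by linarith [ht.2]
  refine ⟨c / (1 - t), div_nonneg hc hs.le, (1 - t) • (ω - xbar), ?_, ?_⟩
  · rw [mem_sub_singleton']
    refine ⟨t • x₀ + (1 - t) • ω, hconv hx₀ hω ht.1 hs.le (by ring), ?_⟩
    module
  · rw [smul_smul, div_mul_cancel₀ c hs.ne']

/-- `cone(Ω - x_t) ⊆ S` for any submodule-set containing `Ω - x̄`. -/
lemma coneHull_shift_subset {X : Type*} [AddCommGroup X] [Module ℝ X]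
    {Ω : Set X} {xbar x₀ : X} (hx₀ : x₀ ∈ Ω) (t : ℝ)
    {S : Submodule ℝ X} (hK : Ω - {xbar} ⊆ (S : Set X)) :
    coneHull (Ω - {(1 - t) • xbar + t • x₀}) ⊆ (S : Set X) := by
  rintro y ⟨c, hc, a, ha, rfl⟩
  rw [mem_sub_singleton'] at ha
  obtain ⟨ω, hω, rfl⟩ := ha
  have h1 : ω - xbar ∈ S := hK (mem_sub_singleton'.mpr ⟨ω, hω, rfl⟩)
  have h2 : x₀ - xbar ∈ S := hK (mem_sub_singleton'.mpr ⟨x₀, hx₀, rfl⟩)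
  have heq : ω - ((1 - t) • xbar + t • x₀) = (ω - xbar) - t • (x₀ - xbar) := by module
  rw [heq]
  exact S.smul_mem c (S.sub_mem h1 (S.smul_mem t h2))

lemma coneHull_shift_eq {X : Type*} [AddCommGroup X] [Module ℝ X]
    {Ω : Set X} (hconv : Convex ℝ Ω) {xbar x₀ : X} (hx₀ : x₀ ∈ Ω) {t : ℝ}
    (ht : t ∈ Set.Ico (0 : ℝ) 1)
    (L : Submodule ℝ X) (hL : (L : Set X) = coneHull (Ω - {xbar})) :
    coneHull (Ω - {(1 - t) • xbar + t • x₀}) = coneHull (Ω - {xbar}) := by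
  apply subset_antisymm
  · rw [← hL]
    exact coneHull_shift_subset hx₀ t (by rw [hL]; exact fun a ha => mem_coneHull_of_mem' ha)
  · exact coneHull_subset_shift hconv hx₀ ht

theorem stmt8 {X : Type*} [AddCommGroup X] [Module ℝ X] [TopologicalSpace X]
    [IsTopologicalAddGroup X] [ContinuousSMul ℝ X] [LocallyConvexSpace ℝ X]
    (Ω : Set X) (hne : Ω.Nonempty) (hconv : Convex ℝ Ω)
    (xbar x₀ : X) (hx₀ : x₀ ∈ Ω) (t : ℝ) (ht : t ∈ Set.Ico (0 : ℝ) 1) :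
    (xbar ∈ sqri Ω → (1 - t) • xbar + t • x₀ ∈ sqri Ω) ∧
    (xbar ∈ ri Ω → (1 - t) • xbar + t • x₀ ∈ ri Ω) ∧
    (xbar ∈ iri Ω → (1 - t) • xbar + t • x₀ ∈ iri Ω) ∧
    (xbar ∈ qri Ω → (1 - t) • xbar + t • x₀ ∈ qri Ω) := by
  have hs : (0 : ℝ) < 1 - t := by linarith [ht.2]
  refine ⟨?_, ?_, ?_, ?_⟩
  · -- sqri
    rintro ⟨hxb, ⟨L, hL⟩, hcl⟩
    have hxt : (1 - t) • xbar + t • x₀ ∈ Ω := hconv hxb hx₀ hs.le ht.1 (by ring)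
    have heq := coneHull_shift_eq hconv hx₀ ht L hL
    exact ⟨hxt, ⟨L, by rw [hL, heq]⟩, by rw [heq]; exact hcl⟩
  · -- ri
    rintro ⟨hxb, V, hV, hprop⟩
    have hxt : (1 - t) • xbar + t • x₀ ∈ Ω := hconv hxb hx₀ hs.le ht.1 (by ring)
    refine ⟨hxt, (fun w : X => (1 - t)⁻¹ • w) ⁻¹' V, ?_, ?_⟩
    · have hcont : Continuous fun w : X => (1 - t)⁻¹ • w := continuous_const_smul _
      have htend : Filter.Tendsto (fun w : X => (1 - t)⁻¹ • w) (nhds 0) (nhds 0) := by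
        simpa using hcont.tendsto 0
      exact htend hV
    · intro w hw hclos
      set v := (1 - t)⁻¹ • w with hv
      have hkey : (1 - t) • v = w := by
        rw [hv, smul_smul, mul_inv_cancel₀ hs.ne', one_smul]
      have hmap : xbar + v ∈ closure (affineSpan ℝ Ω : Set X) := by
        have hf : Continuous fun y : X => (1 - t)⁻¹ • (y -ᵥ x₀) +ᵥ x₀ := by
          simp only [vsub_eq_sub, vadd_eq_add]
          fun_prop
        have hmt : MapsTo (fun y : X => (1 - t)⁻¹ • (y -ᵥ x₀) +ᵥ x₀)
            (affineSpan ℝ Ω : Set X) (affineSpan ℝ Ω : Set X) := fun y hy =>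
          AffineSubspace.smul_vsub_vadd_mem _ _ hy (subset_affineSpan ℝ Ω hx₀)
            (subset_affineSpan ℝ Ω hx₀)
        have hm := map_mem_closure hf hclos hmt
        have hptfix : (1 - t)⁻¹ • (((1 - t) • xbar + t • x₀ + w) -ᵥ x₀) +ᵥ x₀ = xbar + v := by
          simp only [vsub_eq_sub, vadd_eq_add]
          rw [← hkey]
          match_scalars <;> field_simp <;> ring
        rwa [hptfix] at hm
      have hinΩ : xbar + v ∈ Ω := hprop v hw hmap
      have hfin := hconv hinΩ hx₀ hs.le ht.1 (by ring)
      have : (1 - t) • (xbar + v) + t • x₀ = (1 - t) • xbar + t • x₀ + w := by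
        rw [← hkey]; module
      rwa [this] at hfin
  · -- iri
    rintro ⟨hxb, ⟨L, hL⟩⟩
    have hxt : (1 - t) • xbar + t • x₀ ∈ Ω := hconv hxb hx₀ hs.le ht.1 (by ring)
    have heq := coneHull_shift_eq hconv hx₀ ht L hL
    exact ⟨hxt, ⟨L, by rw [hL, heq]⟩⟩
  · -- qri
    rintro ⟨hxb, ⟨L, hL⟩⟩
    have hxt : (1 - t) • xbar + t • x₀ ∈ Ω := hconv hxb hx₀ hs.le ht.1 (by ring)
    have hsubset : coneHull (Ω - {(1 - t) • xbar + t • x₀}) ⊆ (L : Set X) := by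
      refine coneHull_shift_subset hx₀ t ?_
      rw [hL]
      exact fun a ha => subset_closure (mem_coneHull_of_mem' ha)
    have heq : closure (coneHull (Ω - {(1 - t) • xbar + t • x₀}))
        = closure (coneHull (Ω - {xbar})) := by
      apply subset_antisymm
      · have : closure (coneHull (Ω - {(1 - t) • xbar + t • x₀})) ⊆ closure (L : Set X) :=
          closure_mono hsubset
        rwa [hL, closure_closure] at this
      · exact closure_mono (coneHull_subset_shift hconv hx₀ ht)
    exact ⟨hxt, ⟨L, by rw [hL, heq]⟩⟩
end

section
/- Let X and Y be real locally convex topological vector spaces, let T : X → Y be a continuous linear mapping that maps every closed linear subspace of X onto a closed linear subspace of Y, and let Ω ⊂ X be a nonempty convex set. Then T(sqri(Ω)) ⊂ sqri(T(Ω)). If in addition sqri(Ω) ≠ ∅ and sqri(Ω) = iri(Ω), then T(sqri(Ω)) = sqri(T(Ω)). -/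
open Pointwise Set

lemma mem_coneHull_sub {Z : Type*} [AddCommGroup Z] [Module ℝ Z] {A : Set Z} {x y : Z} :
    y ∈ coneHull (A - {x}) ↔ ∃ c : ℝ, 0 ≤ c ∧ ∃ a ∈ A, y = c • (a - x) := by
  constructor
  · rintro ⟨c, hc, u, hu, rfl⟩
    rw [Set.mem_sub] at hu
    obtain ⟨a, ha, b, hb, rfl⟩ := hu
    rw [Set.mem_singleton_iff] at hb
    subst hb
    exact ⟨c, hc, a, ha, rfl⟩
  · rintro ⟨c, hc, a, ha, rfl⟩
    exact ⟨c, hc, a - x, Set.sub_mem_sub ha rfl, rfl⟩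

lemma coneHull_image {X Y : Type*} [AddCommGroup X] [Module ℝ X] [AddCommGroup Y] [Module ℝ Y]
    (T : X →ₗ[ℝ] Y) (A : Set X) : coneHull (T '' A) = T '' coneHull A := by
  ext y
  constructor
  · rintro ⟨c, hc, _, ⟨a, ha, rfl⟩, rfl⟩
    exact ⟨c • a, ⟨c, hc, a, ha, rfl⟩, by simp⟩
  · rintro ⟨_, ⟨c, hc, a, ha, rfl⟩, rfl⟩
    exact ⟨c, hc, T a, ⟨a, ha, rfl⟩, by simp⟩

lemma image_sub_singleton {X Y : Type*} [AddCommGroup X] [Module ℝ X] [AddCommGroup Y]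
    [Module ℝ Y] (T : X →ₗ[ℝ] Y) (A : Set X) (x : X) :
    T '' (A - {x}) = T '' A - {T x} := by
  rw [Set.sub_singleton, Set.sub_singleton, Set.image_image, Set.image_image]
  simp only [map_sub]

/-- If the cone over `Ω - x` is closed under negation, it is a linear subspace. -/
lemma subspace_of_neg {Z : Type*} [AddCommGroup Z] [Module ℝ Z] {Ω : Set Z}
    (hconv : Convex ℝ Ω) {x : Z} (hx : x ∈ Ω)
    (hneg : ∀ a ∈ Ω, x - a ∈ coneHull (Ω - {x})) :
    IsLinearSubspace (coneHull (Ω - {x})) := by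
  have hsmul : ∀ r : ℝ, 0 ≤ r → ∀ u ∈ coneHull (Ω - {x}), r • u ∈ coneHull (Ω - {x}) := by
    rintro r hr u hu
    rw [mem_coneHull_sub] at hu ⊢
    obtain ⟨c, hc, a, ha, rfl⟩ := hu
    exact ⟨r * c, mul_nonneg hr hc, a, ha, smul_smul r c _⟩
  have hneg' : ∀ u ∈ coneHull (Ω - {x}), -u ∈ coneHull (Ω - {x}) := by
    intro u hu
    rw [mem_coneHull_sub] at hu
    obtain ⟨c, hc, a, ha, rfl⟩ := hu
    have : -(c • (a - x)) = c • (x - a) := by module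
    rw [this]
    obtain ⟨c', hc', b, hb, hrel⟩ := mem_coneHull_sub.mp (hneg a ha)
    rw [hrel, smul_smul]
    exact mem_coneHull_sub.mpr ⟨c * c', mul_nonneg hc hc', b, hb, rfl⟩
  have hadd : ∀ u ∈ coneHull (Ω - {x}), ∀ v ∈ coneHull (Ω - {x}),
      u + v ∈ coneHull (Ω - {x}) := by
    intro u hu v hv
    rw [mem_coneHull_sub] at hu hv
    obtain ⟨c₁, hc₁, a₁, ha₁, rfl⟩ := hu
    obtain ⟨c₂, hc₂, a₂, ha₂, rfl⟩ := hv
    rcases eq_or_lt_of_le (add_nonneg hc₁ hc₂) with hs | hs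
    · have h1 : c₁ = 0 := by linarith
      have h2 : c₂ = 0 := by linarith
      subst h1; subst h2
      exact mem_coneHull_sub.mpr ⟨0, le_rfl, x, hx, by simp⟩
    · have hs0 : c₁ + c₂ ≠ 0 := ne_of_gt hs
      have hm : (c₁ / (c₁ + c₂)) • a₁ + (c₂ / (c₁ + c₂)) • a₂ ∈ Ω := by
        refine hconv ha₁ ha₂ (div_nonneg hc₁ hs.le) (div_nonneg hc₂ hs.le) ?_
        field_simp
      refine mem_coneHull_sub.mpr ⟨c₁ + c₂, hs.le, _, hm, ?_⟩
      match_scalars <;> field_simp <;> ring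
  refine ⟨{ carrier := coneHull (Ω - {x})
            zero_mem' := mem_coneHull_sub.mpr ⟨0, le_rfl, x, hx, by simp⟩
            add_mem' := fun hu hv => hadd _ hu _ hv
            smul_mem' := by
              intro r u hu
              rcases le_or_gt 0 r with h | h
              · exact hsmul r h u hu
              · have : r • u = (-r) • (-u) := by module
                rw [this]
                exact hsmul (-r) (by linarith) _ (hneg' u hu) }, rfl⟩

lemma mem_iri_iff {Z : Type*} [AddCommGroup Z] [Module ℝ Z] {Ω : Set Z}
    (hconv : Convex ℝ Ω) {x : Z} :
    x ∈ iri Ω ↔ x ∈ Ω ∧ ∀ a ∈ Ω, x - a ∈ coneHull (Ω - {x}) := by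
  constructor
  · rintro ⟨hx, L, hL⟩
    refine ⟨hx, fun a ha => ?_⟩
    have h1 : a - x ∈ coneHull (Ω - {x}) :=
      ⟨1, zero_le_one, a - x, Set.sub_mem_sub ha rfl, (one_smul ℝ _).symm⟩
    rw [← hL] at h1 ⊢
    simpa using L.neg_mem h1
  · rintro ⟨hx, h⟩
    exact ⟨hx, subspace_of_neg hconv hx h⟩

/-- Segment property of the intrinsic relative interior. -/
lemma iri_segment {Z : Type*} [AddCommGroup Z] [Module ℝ Z] {Ω : Set Z}
    (hconv : Convex ℝ Ω) {xs w : Z} (hxs : xs ∈ iri Ω) (hw : w ∈ Ω)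
    {t : ℝ} (ht0 : 0 < t) (ht1 : t ≤ 1) : t • xs + (1 - t) • w ∈ iri Ω := by
  rw [mem_iri_iff hconv] at hxs ⊢
  obtain ⟨hxsΩ, hkey⟩ := hxs
  set x := t • xs + (1 - t) • w with hxdef
  have hxΩ : x ∈ Ω := hconv hxsΩ hw ht0.le (by linarith) (by ring)
  refine ⟨hxΩ, fun a ha => ?_⟩
  obtain ⟨c, hc0, b, hb, hrel⟩ := mem_coneHull_sub.mp (hkey a ha)
  -- hrel : xs - a = c • (b - xs)
  set μ := (1 + c - t) / t with hμ
  have hμ0 : 0 ≤ μ := div_nonneg (by linarith) ht0.le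
  have htμ : t * μ = 1 + c - t := by
    rw [hμ]; field_simp
  rcases eq_or_lt_of_le hμ0 with hμz | hμpos
  · -- μ = 0, so c = 0, t = 1, x = xs = a
    have h1 : 1 + c - t = 0 := by
      rw [← htμ, ← hμz, mul_zero]
    have hcz : c = 0 := by linarith
    have htz : t = 1 := by linarith
    have hxa : x = a := by
      have hx2 : xs - a = 0 := by rw [hrel, hcz, zero_smul]
      have : x = xs := by rw [hxdef, htz]; module
      rw [this]
      have := sub_eq_zero.mp hx2
      exact this
    exact mem_coneHull_sub.mpr ⟨0, le_rfl, x, hxΩ, by rw [hxa]; simp⟩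
  · set α := c / μ with hα
    have hμα : μ * α = c := by rw [hα]; field_simp
    have hα0 : 0 ≤ α := div_nonneg hc0 hμ0
    have hα1 : α ≤ 1 := by
      rw [hα, div_le_one hμpos]
      rw [hμ, le_div_iff₀ ht0]
      nlinarith
    have hb' : α • b + (1 - α) • w ∈ Ω := hconv hb hw hα0 (by linarith) (by ring)
    refine mem_coneHull_sub.mpr ⟨μ, hμ0, _, hb', ?_⟩
    have ha' : a = (1 + c) • xs - c • b := by
      linear_combination (norm := module) -hrel
    rw [hxdef, ha']
    match_scalars
    · linarith [htμ]
    · linarith [hμα]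
    · nlinarith [htμ, hμα]

theorem stmt10 {X Y : Type*}
    [AddCommGroup X] [Module ℝ X] [TopologicalSpace X]
    [IsTopologicalAddGroup X] [ContinuousSMul ℝ X] [LocallyConvexSpace ℝ X]
    [AddCommGroup Y] [Module ℝ Y] [TopologicalSpace Y]
    [IsTopologicalAddGroup Y] [ContinuousSMul ℝ Y] [LocallyConvexSpace ℝ Y]
    (T : X →L[ℝ] Y)
    (hT : ∀ L : Submodule ℝ X, IsClosed (L : Set X) → IsClosed (T '' (L : Set X)))
    (Ω : Set X) (hne : Ω.Nonempty) (hconv : Convex ℝ Ω) :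
    T '' sqri Ω ⊆ sqri (T '' Ω) ∧
    ((sqri Ω).Nonempty → sqri Ω = iri Ω → T '' sqri Ω = sqri (T '' Ω)) := by
  have hTcoe : ∀ S : Set X, T.toLinearMap '' S = T '' S := fun S => rfl
  have key : ∀ x : X, coneHull (T '' Ω - {T x}) = T '' coneHull (Ω - {x}) := by
    intro x
    have h1 : T '' Ω - {T x} = T.toLinearMap '' Ω - {T.toLinearMap x} := rfl
    rw [h1, ← image_sub_singleton, coneHull_image]
    rfl
  have part1 : T '' sqri Ω ⊆ sqri (T '' Ω) := by
    rintro _ ⟨x, ⟨hxΩ, ⟨L, hL⟩, hcl⟩, rfl⟩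
    have hLclosed : IsClosed (L : Set X) := by rw [hL]; exact hcl
    refine ⟨⟨x, hxΩ, rfl⟩, ⟨L.map T.toLinearMap, ?_⟩, ?_⟩
    · rw [Submodule.map_coe, hTcoe, key x, hL]
    · rw [key x, ← hL]
      exact hT L hLclosed
  refine ⟨part1, fun hne2 hiri => ?_⟩
  refine Set.Subset.antisymm part1 ?_
  rintro y ⟨⟨x₀, hx₀, rfl⟩, ⟨L', hL'⟩, hclY⟩
  obtain ⟨xs, hxs⟩ := hne2
  have hxsiri : xs ∈ iri Ω := hiri ▸ hxs
  -- T xs - T x₀ is in the cone, hence so is its negation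
  have h1 : T xs - T x₀ ∈ (L' : Set Y) := by
    rw [hL']
    exact mem_coneHull_sub.mpr ⟨1, zero_le_one, T xs, ⟨xs, hxs.1, rfl⟩, (one_smul ℝ _).symm⟩
  have h2 : T x₀ - T xs ∈ (L' : Set Y) := by
    have := L'.neg_mem h1
    rwa [neg_sub] at this
  rw [hL'] at h2
  obtain ⟨c, hc0, _, ⟨w, hw, rfl⟩, hrel⟩ := mem_coneHull_sub.mp h2
  -- hrel : T x₀ - T xs = c • (T w - T x₀)
  have h1c : (0:ℝ) < 1 + c := by linarith
  set t := 1 / (1 + c) with htdef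
  have ht0 : 0 < t := by positivity
  have ht1 : t ≤ 1 := by
    rw [htdef, div_le_one h1c]; linarith
  set x := t • xs + (1 - t) • w with hxdef
  have hx_iri : x ∈ iri Ω := iri_segment hconv hxsiri hw ht0 ht1
  have hTx : T x = T x₀ := by
    have h3 : (1 + c) • T x₀ = T xs + c • T w := by
      linear_combination (norm := module) hrel
    have h4 : T x = t • T xs + (1 - t) • T w := by
      rw [hxdef, map_add, map_smul, map_smul]
    have h5 : t • ((1 + c) • T x₀) = t • (T xs + c • T w) := by rw [h3]
    rw [smul_smul] at h5
    have ht1c : t * (1 + c) = 1 := by rw [htdef]; field_simp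
    rw [ht1c, one_smul] at h5
    rw [h4, h5]
    match_scalars <;> rw [htdef] <;> field_simp <;> ring
  exact ⟨x, hiri ▸ hx_iri, hTx⟩
end

section
/- Let X be a real locally convex topological vector space, let Ω ⊂ X be a quasi-nearly convex set, and let x̄ ∈ Ω. Then x̄ ∈ qri(Ω) if and only if the normal cone N(x̄; Ω) is a linear subspace of the topological dual X*. -/
open Pointwise Set

/-- A set is quasi-nearly convex if it is squeezed between a convex set with
nonempty quasi-relative interior and its closure. -/
def QuasiNearlyConvex {Z : Type*} [AddCommGroup Z] [Module ℝ Z] [TopologicalSpace Z]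
    (A : Set Z) : Prop :=
  ∃ C : Set Z, Convex ℝ C ∧ (qri C).Nonempty ∧ C ⊆ A ∧ A ⊆ closure C

/-- The normal cone to a set at a point, as a subset of the topological dual. -/
def normalCone {Z : Type*} [AddCommGroup Z] [Module ℝ Z] [TopologicalSpace Z]
    (A : Set Z) (xbar : Z) : Set (Z →L[ℝ] ℝ) :=
  {f | ∀ x ∈ A, f (x - xbar) ≤ 0}

section Aux
set_option linter.unusedSectionVars false

variable {X : Type*} [AddCommGroup X] [Module ℝ X]

lemma smul_mem_coneHull {A : Set X} {a : X} {c : ℝ} (hc : 0 ≤ c) (ha : a ∈ coneHull A) :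
    c • a ∈ coneHull A := by
  obtain ⟨d, hd, b, hb, rfl⟩ := ha
  exact ⟨c * d, mul_nonneg hc hd, b, hb, (mul_smul c d b).symm⟩

lemma convex_coneHull {A : Set X} (hA : Convex ℝ A) (hne : A.Nonempty) :
    Convex ℝ (coneHull A) := by
  rintro x ⟨c1, hc1, a1, ha1, rfl⟩ y ⟨c2, hc2, a2, ha2, rfl⟩ s t hs ht hst
  have hu : 0 ≤ s * c1 := mul_nonneg hs hc1
  have hv : 0 ≤ t * c2 := mul_nonneg ht hc2
  rcases eq_or_lt_of_le (add_nonneg hu hv) with hw | hw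
  · have h1 : s * c1 = 0 := by linarith [hu, hv]
    have h2 : t * c2 = 0 := by linarith [hu, hv]
    obtain ⟨a, ha⟩ := hne
    refine ⟨0, le_refl 0, a, ha, ?_⟩
    simp [smul_smul, h1, h2]
  · set w := s * c1 + t * c2 with hwdef
    refine ⟨w, hw.le, (s * c1 / w) • a1 + (t * c2 / w) • a2,
      hA ha1 ha2 (div_nonneg hu hw.le) (div_nonneg hv hw.le) (by field_simp; exact hwdef.symm), ?_⟩
    simp only [smul_add, smul_smul]
    rw [mul_div_cancel₀ _ hw.ne', mul_div_cancel₀ _ hw.ne']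

variable [TopologicalSpace X] [IsTopologicalAddGroup X] [ContinuousSMul ℝ X]

lemma smul_mem_closure_coneHull {A : Set X} {c : ℝ} (hc : 0 ≤ c)
    {x : X} (hx : x ∈ closure (coneHull A)) : c • x ∈ closure (coneHull A) :=
  map_mem_closure (continuous_const_smul c) hx (fun _ ha => smul_mem_coneHull hc ha)

lemma mem_normalCone_iff (Ω : Set X) (xbar : X) (f : X →L[ℝ] ℝ) :
    f ∈ normalCone Ω xbar ↔ ∀ x ∈ closure (coneHull (Ω - {xbar})), f x ≤ 0 := by
  constructor
  · intro hf x hx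
    have hsub : coneHull (Ω - {xbar}) ⊆ f ⁻¹' Iic 0 := by
      rintro _ ⟨c, hc, a, ha, rfl⟩
      obtain ⟨ω, hω, z, hz, rfl⟩ := ha
      rw [mem_singleton_iff] at hz; subst z
      have : f (ω - xbar) ≤ 0 := hf ω hω
      simp only [mem_preimage, mem_Iic, map_smul, smul_eq_mul]
      exact mul_nonpos_of_nonneg_of_nonpos hc this
    exact closure_minimal hsub (isClosed_Iic.preimage f.continuous) hx
  · intro hf x hx
    have : x - xbar ∈ coneHull (Ω - {xbar}) :=
      ⟨1, zero_le_one, x - xbar, sub_mem_sub hx rfl, (one_smul ℝ _).symm⟩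
    exact hf _ (subset_closure this)

end Aux

theorem stmt14 {X : Type*} [AddCommGroup X] [Module ℝ X] [TopologicalSpace X]
    [IsTopologicalAddGroup X] [ContinuousSMul ℝ X] [LocallyConvexSpace ℝ X]
    (Ω : Set X) (h : QuasiNearlyConvex Ω) (xbar : X) (hxbar : xbar ∈ Ω) :
    xbar ∈ qri Ω ↔ IsLinearSubspace (normalCone Ω xbar) := by
  obtain ⟨C, hCconv, ⟨x0, hx0qri⟩, hCΩ, hΩC⟩ := h
  have hx0C : x0 ∈ C := hx0qri.1
  set K := closure (coneHull (Ω - {xbar})) with hKdef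
  -- K equals the closure of the cone over C - x̄
  have hKeq : K = closure (coneHull (C - {xbar})) := by
    apply Subset.antisymm
    · apply closure_minimal _ isClosed_closure
      rintro _ ⟨c, hc, a, ha, rfl⟩
      obtain ⟨ω, hω, z, hz, rfl⟩ := ha
      rw [mem_singleton_iff] at hz; subst z
      have hωC : ω ∈ closure C := hΩC hω
      have hcont : Continuous (fun z : X => c • (z - xbar)) :=
        (continuous_const_smul c).comp (continuous_id.sub continuous_const)
      exact map_mem_closure (f := fun z : X => c • (z - xbar)) hcont hωC
        (fun z hz => ⟨c, hc, z - xbar, sub_mem_sub hz rfl, rfl⟩)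
    · exact closure_mono (coneHull_mono (sub_subset_sub_right hCΩ))
  have hKconv : Convex ℝ K := by
    rw [hKeq]
    exact (convex_coneHull (hCconv.sub (convex_singleton xbar))
      ⟨x0 - xbar, sub_mem_sub hx0C rfl⟩).closure
  have hKclosed : IsClosed K := isClosed_closure
  have h0K : (0 : X) ∈ K :=
    subset_closure ⟨0, le_refl 0, x0 - xbar, sub_mem_sub (hCΩ hx0C) rfl, (zero_smul ℝ _).symm⟩
  constructor
  · rintro ⟨-, L, hL⟩
    -- every normal functional vanishes on Ω - x̄
    have hvanish : ∀ f ∈ normalCone Ω xbar, ∀ x ∈ Ω, f (x - xbar) = 0 := by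
      intro f hf x hx
      have hK : ∀ y ∈ K, f y ≤ 0 := (mem_normalCone_iff Ω xbar f).1 hf
      have hv : x - xbar ∈ K := subset_closure
        ⟨1, zero_le_one, x - xbar, sub_mem_sub hx rfl, (one_smul ℝ _).symm⟩
      have hvL : x - xbar ∈ L := by rw [← SetLike.mem_coe, hL]; exact hv
      have hnv : -(x - xbar) ∈ K := by
        have h' : -(x - xbar) ∈ (L : Set X) := neg_mem hvL
        rw [hL] at h'; exact h'
      have h1 : f (x - xbar) ≤ 0 := hK _ hv
      have h2 : f (-(x - xbar)) ≤ 0 := hK _ hnv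
      rw [map_neg] at h2
      linarith
    refine ⟨{ carrier := normalCone Ω xbar
              add_mem' := ?_
              zero_mem' := ?_
              smul_mem' := ?_ }, rfl⟩
    · intro f g hf hg x hx
      have := hf x hx
      have := hg x hx
      simp only [ContinuousLinearMap.add_apply]
      linarith
    · intro x hx; simp
    · intro c f hf x hx
      have := hvanish f hf x hx
      simp [this]
  · rintro ⟨L, hL⟩
    refine ⟨hxbar, ?_⟩
    refine ⟨{ carrier := {x | ∀ f ∈ normalCone Ω xbar, f x = 0}
              add_mem' := ?_
              zero_mem' := ?_
              smul_mem' := ?_ }, ?_⟩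
    · intro a b ha hb f hf; rw [map_add, ha f hf, hb f hf, add_zero]
    · intro f hf; exact map_zero f
    · intro c a ha f hf; rw [map_smul, ha f hf, smul_zero]
    · -- the carrier equals K
      ext x
      simp only [SetLike.mem_coe, Submodule.mem_mk, AddSubmonoid.mem_mk,
        AddSubsemigroup.mem_mk, mem_setOf_eq]
      constructor
      · -- M ⊆ K : separation
        intro hx
        by_contra hxK
        obtain ⟨f, u, hfu, hux⟩ := geometric_hahn_banach_closed_point hKconv hKclosed hxK
        have hu0 : 0 < u := by have := hfu 0 h0K; rwa [map_zero] at this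
        have hfK : ∀ b ∈ K, f b ≤ 0 := by
          intro b hb
          by_contra hpos
          push_neg at hpos
          have ht : 0 ≤ (u + 1) / f b := div_nonneg (by linarith) hpos.le
          have hmem : ((u + 1) / f b) • b ∈ K := smul_mem_closure_coneHull ht hb
          have := hfu _ hmem
          rw [map_smul, smul_eq_mul, div_mul_cancel₀ _ hpos.ne'] at this
          linarith
        have hfN : f ∈ normalCone Ω xbar := (mem_normalCone_iff Ω xbar f).2 hfK
        have := hx f hfN
        linarith
      · -- K ⊆ M
        intro hx f hf
        have h1 : f x ≤ 0 := (mem_normalCone_iff Ω xbar f).1 hf x hx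
        have hfL : f ∈ L := by rw [← SetLike.mem_coe, hL]; exact hf
        have hnf : -f ∈ normalCone Ω xbar := by rw [← hL]; exact neg_mem hfL
        have h2 : (-f) x ≤ 0 := (mem_normalCone_iff Ω xbar (-f)).1 hnf x hx
        rw [ContinuousLinearMap.neg_apply] at h2
        linarith
end
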